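/- Suppose y^n ∈ X satisfies the optimality condition ∇H^n(y^n) − ∇F^n(u^n) + M(y^n − u^n) = 0 and F^n is such that its gradient is strongly monotone with parameter 2/(3δt) − L (which holds since δt < 2/(3L)). Then E^n(y^n) ≤ E^n(u^n) − (4/(3δt) − L/2)‖y^n − u^n‖² − ‖y^n − u^n‖_M², i.e., E^n(y^n) ≤ E^n(u^n) − ‖d^n‖²_{N₁} with N₁ = (4/(3δt) − L/2)I + M and d^n = y^n − u^n. -/

import Mathlib

open scoped RealInnerProductSpace

section Helpers

set_option linter.unusedSectionVars false
set_option linter.unusedVariables false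

variable {X : Type*} [NormedAddCommGroup X] [InnerProductSpace ℝ X] [CompleteSpace X]


lemma aux_littleO_sq (x : X) :
    (fun x' : X => ‖x' - x‖ ^ 2) =o[nhds x] fun x' => x' - x := by
  rw [Asymptotics.isLittleO_iff]
  intro c hc
  filter_upwards [Metric.ball_mem_nhds x hc] with y hy
  have h1 : ‖y - x‖ < c := by rwa [← dist_eq_norm]
  rw [Real.norm_eq_abs, abs_of_nonneg (by positivity), pow_two]
  exact mul_le_mul_of_nonneg_right h1.le (norm_nonneg _)

lemma hasGradientAt_norm_sq (c x : X) :
    HasGradientAt (fun u => ‖u - c‖ ^ 2) ((2:ℝ) • (x - c)) x := by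
  rw [hasGradientAt_iff_isLittleO]
  have he : ∀ x' : X, ‖x' - x‖ ^ 2
      = ‖x' - c‖ ^ 2 - ‖x - c‖ ^ 2 - ⟪(2:ℝ) • (x - c), x' - x⟫ := by
    intro x'
    have h1 : x' - c = (x - c) + (x' - x) := by abel
    rw [h1, norm_add_sq_real, real_inner_smul_left]
    ring
  exact (aux_littleO_sq x).congr' (Filter.Eventually.of_forall he) Filter.EventuallyEq.rfl

lemma hasGradientAt_inner_const (c b x : X) :
    HasGradientAt (fun u : X => ⟪c, u - b⟫) c x := by
  rw [hasGradientAt_iff_isLittleO]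
  have he : ∀ x' : X, ⟪c, x' - b⟫ - ⟪c, x - b⟫ - ⟪c, x' - x⟫ = 0 := by
    intro x'
    rw [← inner_sub_right, sub_sub_sub_cancel_right, sub_self]
  simp only [he]
  exact Asymptotics.isLittleO_zero _ _

lemma HasGradientAt.add' {f g : X → ℝ} {a b x : X} (hf : HasGradientAt f a x)
    (hg : HasGradientAt g b x) : HasGradientAt (fun u => f u + g u) (a + b) x := by
  rw [hasGradientAt_iff_hasFDerivAt] at hf hg ⊢
  have := hf.add hg
  simp only [map_add] at this ⊢
  exact this

lemma HasGradientAt.sub' {f g : X → ℝ} {a b x : X} (hf : HasGradientAt f a x)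
    (hg : HasGradientAt g b x) : HasGradientAt (fun u => f u - g u) (a - b) x := by
  rw [hasGradientAt_iff_hasFDerivAt] at hf hg ⊢
  have := hf.sub hg
  simp only [map_sub] at this ⊢
  exact this

lemma HasGradientAt.smul' {f : X → ℝ} {a x : X} (r : ℝ) (hf : HasGradientAt f a x) :
    HasGradientAt (fun u => r * f u) (r • a) x := by
  rw [hasGradientAt_iff_hasFDerivAt] at hf ⊢
  have := hf.const_smul r
  simp only [map_smul] at this ⊢
  exact this

lemma convex_grad_ineq {H : X → ℝ} {h : X → X} (hH : ∀ x, HasGradientAt H (h x) x)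
    (hconv : ConvexOn ℝ Set.univ H) (x y : X) :
    H x + ⟪h x, y - x⟫ ≤ H y := by
  set e := y - x with he
  set ψ : ℝ → ℝ := fun t => H (x + t • e) with hψ
  have hψconv : ConvexOn ℝ Set.univ ψ := by
    refine ⟨convex_univ, ?_⟩
    intro a _ b _ la mu hla hmu hlamu
    have hkey : x + (la * a + mu * b) • e = la • (x + a • e) + mu • (x + b • e) := by
      have h2 : la • (x + a • e) + mu • (x + b • e)
          = (la + mu) • x + (la * a + mu * b) • e := by
        simp only [smul_add, smul_smul, add_smul]
        abel
      rw [h2, hlamu, one_smul]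
    have := hconv.2 (Set.mem_univ (x + a • e)) (Set.mem_univ (x + b • e)) hla hmu hlamu
    simpa [hψ, smul_eq_mul, hkey] using this
  have hψderiv : HasDerivAt ψ ⟪h x, e⟫ 0 := by
    have hline : HasDerivAt (fun s : ℝ => x + s • e) e 0 := by
      simpa using ((hasDerivAt_id (0:ℝ)).smul_const e).const_add x
    have := ((hH (x + (0:ℝ) • e)).hasFDerivAt).comp_hasDerivAt 0 hline
    simp at this
    exact this
  have hslope := hψconv.le_slope_of_hasDerivAt (Set.mem_univ (0:ℝ)) (Set.mem_univ (1:ℝ))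
    zero_lt_one hψderiv
  have hs : slope ψ 0 1 = ψ 1 - ψ 0 := by simp [slope_def_field]
  have hψ1 : ψ 1 = H y := by simp [hψ, he]
  have hψ0 : ψ 0 = H x := by simp [hψ]
  rw [hs, hψ1, hψ0] at hslope
  linarith

lemma descent_lemma {F : X → ℝ} {f : X → X} (hF : ∀ x, HasGradientAt F (f x) x)
    {L : ℝ} (hL : 0 ≤ L) (hLip : ∀ x y, ‖f x - f y‖ ≤ L * ‖x - y‖) (a d : X) :
    F (a + d) ≤ F a + ⟪f a, d⟫ + L / 2 * ‖d‖ ^ 2 := by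
  set g : ℝ → ℝ := fun t => F (a + t • d) - t * ⟪f a, d⟫ - t ^ 2 * (L / 2 * ‖d‖ ^ 2) with hg
  have hline : ∀ t : ℝ, HasDerivAt (fun s : ℝ => a + s • d) d t := fun t => by
    simpa using ((hasDerivAt_id t).smul_const d).const_add a
  have hgd : ∀ t : ℝ, HasDerivAt g
      (⟪f (a + t • d), d⟫ - ⟪f a, d⟫ - 2 * t * (L / 2 * ‖d‖ ^ 2)) t := by
    intro t
    have h1 : HasDerivAt (fun s : ℝ => F (a + s • d)) ⟪f (a + t • d), d⟫ t := by
      have := ((hF (a + t • d)).hasFDerivAt).comp_hasDerivAt t (hline t)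
      simp at this
      exact this
    have h2 : HasDerivAt (fun s : ℝ => s * ⟪f a, d⟫) ⟪f a, d⟫ t := by
      simpa using (hasDerivAt_id t).mul_const (⟪f a, d⟫)
    have h3 : HasDerivAt (fun s : ℝ => s ^ 2 * (L / 2 * ‖d‖ ^ 2))
        (2 * t * (L / 2 * ‖d‖ ^ 2)) t := by
      have := (hasDerivAt_pow 2 t).mul_const (L / 2 * ‖d‖ ^ 2)
      rw [show (2 * t * (L / 2 * ‖d‖ ^ 2)) = ((2:ℕ):ℝ) * t ^ (2 - 1) * (L / 2 * ‖d‖ ^ 2) by norm_num]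
      exact this
    exact (h1.sub h2).sub h3
  have hcont : Continuous g := by
    have : Differentiable ℝ g := fun t => (hgd t).differentiableAt
    exact this.continuous
  have hmono : AntitoneOn g (Set.Icc 0 1) := by
    apply antitoneOn_of_deriv_nonpos (convex_Icc 0 1) hcont.continuousOn
    · intro t _
      exact (hgd t).differentiableAt.differentiableWithinAt
    · intro t ht
      rw [interior_Icc] at ht
      rw [(hgd t).deriv]
      have hcs : ⟪f (a + t • d) - f a, d⟫ ≤ ‖f (a + t • d) - f a‖ * ‖d‖ :=
        real_inner_le_norm _ _
      have hlip' : ‖f (a + t • d) - f a‖ ≤ L * (t * ‖d‖) := by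
        have h4 := hLip (a + t • d) a
        have h5 : ‖a + t • d - a‖ = t * ‖d‖ := by
          simp [norm_smul, abs_of_pos ht.1]
        rw [h5] at h4
        linarith [h4]
      have h6 : ⟪f (a + t • d), d⟫ - ⟪f a, d⟫ ≤ L * t * ‖d‖ ^ 2 := by
        rw [inner_sub_left] at hcs
        nlinarith [norm_nonneg d, norm_nonneg (f (a + t • d) - f a)]
      nlinarith
  have h01 : g 1 ≤ g 0 := hmono (by norm_num) (by norm_num) zero_le_one
  have hg1 : g 1 = F (a + d) - ⟪f a, d⟫ - L / 2 * ‖d‖ ^ 2 := by simp [hg]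
  have hg0 : g 0 = F a := by simp [hg]
  rw [hg1, hg0] at h01
  linarith



end Helpers



/-- Energy decrease: if `yⁿ` satisfies the optimality condition
`∇Hⁿ(yⁿ) - ∇Fⁿ(uⁿ) + M(yⁿ - uⁿ) = 0` and `0 < δt < 2/(3L)`, then
`Eⁿ(yⁿ) ≤ Eⁿ(uⁿ) - (4/(3δt) - L/2)‖yⁿ - uⁿ‖² - ‖yⁿ - uⁿ‖²_M`. -/
theorem energy_decrease_un
    {X : Type*} [NormedAddCommGroup X] [InnerProductSpace ℝ X] [FiniteDimensional ℝ X]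
    (H : X → ℝ) (h : X → X) (hH : ∀ x : X, HasGradientAt H (h x) x)
    (hHconv : ConvexOn ℝ Set.univ H)
    (F : X → ℝ) (f : X → X) (hF : ∀ x : X, HasGradientAt F (f x) x)
    (L : ℝ) (hL : 0 < L) (hLip : ∀ x y : X, ‖f x - f y‖ ≤ L * ‖x - y‖)
    (δt : ℝ) (hδt : 0 < δt) (hδt2 : δt < 2 / (3 * L))
    (M : X →L[ℝ] X) (hMsym : ∀ x y : X, ⟪M x, y⟫ = ⟪x, M y⟫)
    (hMpsd : ∀ x : X, 0 ≤ ⟪M x, x⟫)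
    (un unm1 : X)
    (Hn Fn En : X → ℝ)
    (hHn : ∀ u : X, Hn u = H u + (1 / δt) * ‖u - un‖ ^ 2)
    (hFn : ∀ u : X, Fn u = (1 / (3 * δt)) * ‖u - unm1‖ ^ 2 - F u
      - ⟪f un - f unm1, u - unm1⟫)
    (hEn : ∀ u : X, En u = Hn u - Fn u)
    (yn : X)
    (hopt : gradient Hn yn - gradient Fn un + M (yn - un) = 0) :
    En yn ≤ En un - (4 / (3 * δt) - L / 2) * ‖yn - un‖ ^ 2
      - ⟪M (yn - un), yn - un⟫ := by
  -- gradients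
  have hgH : gradient Hn yn = h yn + (1 / δt) • ((2:ℝ) • (yn - un)) := by
    have h1 : HasGradientAt (fun u => H u + (1 / δt) * ‖u - un‖ ^ 2)
        (h yn + (1 / δt) • ((2:ℝ) • (yn - un))) yn :=
      (hH yn).add' (HasGradientAt.smul' (1 / δt) (hasGradientAt_norm_sq un yn))
    exact (h1.congr_of_eventuallyEq (Filter.Eventually.of_forall hHn)).gradient
  have hgF : gradient Fn un = (1 / (3 * δt)) • ((2:ℝ) • (un - unm1)) - f un
      - (f un - f unm1) := by
    have h1 : HasGradientAt
        (fun u => (1 / (3 * δt)) * ‖u - unm1‖ ^ 2 - F u - ⟪f un - f unm1, u - unm1⟫)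
        ((1 / (3 * δt)) • ((2:ℝ) • (un - unm1)) - f un - (f un - f unm1)) un :=
      ((HasGradientAt.smul' (1 / (3 * δt)) (hasGradientAt_norm_sq unm1 un)).sub'
        (hF un)).sub' (hasGradientAt_inner_const (f un - f unm1) unm1 un)
    exact (h1.congr_of_eventuallyEq (Filter.Eventually.of_forall hFn)).gradient
  have hvec : (h yn + (1 / δt) • ((2:ℝ) • (yn - un)))
      - ((1 / (3 * δt)) • ((2:ℝ) • (un - unm1)) - f un - (f un - f unm1))
      + M (yn - un) = 0 := by
    rw [← hgH, ← hgF]; exact hopt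
  have key := congrArg (fun v : X => ⟪v, yn - un⟫) hvec
  simp only [inner_add_left, inner_sub_left, real_inner_smul_left,
    real_inner_self_eq_norm_sq, inner_zero_left] at key
  -- convexity inequality
  have hHineq := convex_grad_ineq hH hHconv yn un
  have hneg : ⟪h yn, un - yn⟫ = -⟪h yn, yn - un⟫ := by
    rw [show un - yn = -(yn - un) by abel, inner_neg_right]
  rw [hneg] at hHineq
  -- descent inequality
  have hFineq := descent_lemma hF hL.le hLip un (yn - un)
  rw [show un + (yn - un) = yn by abel] at hFineq
  -- expansions
  have hq : ‖yn - unm1‖ ^ 2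
      = ‖un - unm1‖ ^ 2 + 2 * ⟪un - unm1, yn - un⟫ + ‖yn - un‖ ^ 2 := by
    rw [show yn - unm1 = (un - unm1) + (yn - un) by abel, norm_add_sq_real]
  have hcin : ⟪f un - f unm1, yn - unm1⟫
      = ⟪f un - f unm1, un - unm1⟫ + ⟪f un - f unm1, yn - un⟫ := by
    rw [show yn - unm1 = (un - unm1) + (yn - un) by abel, inner_add_right]
  rw [hEn yn, hEn un, hHn yn, hHn un, hFn yn, hFn un, hq, hcin, sub_self, norm_zero]
  have hδt' : δt ≠ 0 := ne_of_gt hδt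
  have e1 : ⟪un - unm1, yn - un⟫ = ⟪un, yn - un⟫ - ⟪unm1, yn - un⟫ :=
    inner_sub_left _ _ _
  have e2 : ⟪f un - f unm1, yn - un⟫ = ⟪f un, yn - un⟫ - ⟪f unm1, yn - un⟫ :=
    inner_sub_left _ _ _
  have e3 : ‖yn - un‖ ^ 2 = ⟪yn, yn - un⟫ - ⟪un, yn - un⟫ := by
    rw [← real_inner_self_eq_norm_sq, inner_sub_left]
  have r1 : 1 / (3 * δt) = (1 / 3) * (1 / δt) := by ring
  have r2 : 4 / (3 * δt) = (4 / 3) * (1 / δt) := by ring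
  rw [r1, r2]
  rw [r1, ← e1, ← e2, ← e3] at key
  linarith [key, hHineq, hFineq]
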